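/- arXiv:1611.03991 — 2 statements merged into one kernel-verified Lean document; each statement's English description precedes it below -/
import Mathlib

section
/- Let T be a tournament, R a minimal τ-retentive set of T, and u → v an arc in the directed domination graph of T[R]. Then no vertex of T dominates both u and v. -/
variable {V : Type}

/-- Inneighbors of `v` inside the subtournament on `s` (excluding `v` itself). -/
def inn [DecidableEq V] (r : V → V → Prop) [DecidableRel r] (s : Finset V) (v : V) :
    Finset V :=
  (s.filter fun u => r u v).erase v

lemma inn_card_lt [DecidableEq V] (r : V → V → Prop) [DecidableRel r]
    (s : Finset V) (v : V) (hv : v ∈ s) : (inn r s v).card < s.card := by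
  have h1 : inn r s v ⊆ s.erase v := by
    intro x hx
    rcases Finset.mem_erase.mp hx with ⟨hxv, hx2⟩
    exact Finset.mem_erase.mpr ⟨hxv, (Finset.mem_filter.mp hx2).1⟩
  calc (inn r s v).card ≤ (s.erase v).card := Finset.card_le_card h1
    _ < s.card := Finset.card_erase_lt_of_mem hv

/-- The tournament equilibrium set of the subtournament of `r` on `s`:
the union of all minimal τ-retentive sets. -/
def tau [DecidableEq V] (r : V → V → Prop) [DecidableRel r] (s : Finset V) : Set V :=
  {x | ∃ A : Finset V, x ∈ A ∧ A ⊆ s ∧ A.Nonempty ∧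
    (∀ v, v ∈ s → v ∈ A → ((inn r s v).Nonempty → tau r (inn r s v) ⊆ ↑A)) ∧
    ∀ B : Finset V, B ⊆ s → B ⊂ A →
      ¬ (B.Nonempty ∧
        ∀ v, v ∈ s → v ∈ B → ((inn r s v).Nonempty → tau r (inn r s v) ⊆ ↑B))}
termination_by s.card
decreasing_by
  all_goals exact inn_card_lt r s v (by assumption)

/-- `A` is a τ-retentive set of the tournament on `s`. -/
def Retentive [DecidableEq V] (r : V → V → Prop) [DecidableRel r] (s A : Finset V) : Prop :=
  A ⊆ s ∧ A.Nonempty ∧ ∀ v ∈ A, (inn r s v).Nonempty → tau r (inn r s v) ⊆ ↑A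

/-- `A` is a minimal τ-retentive set of the tournament on `s`. -/
def MinRetentive [DecidableEq V] (r : V → V → Prop) [DecidableRel r] (s A : Finset V) : Prop :=
  Retentive r s A ∧ ∀ B, Retentive r s B → B ⊆ A → B = A

/-- `r` is a tournament on the vertex set `s`. -/
def IsTournament (r : V → V → Prop) (s : Finset V) : Prop :=
  (∀ v ∈ s, ¬ r v v) ∧ ∀ u ∈ s, ∀ v ∈ s, u ≠ v → (r u v ↔ ¬ r v u)

/-- `u` is the captain of `v` in the subtournament on `s`:
`u` dominates `v` and all other inneighbors of `v`. -/
def IsCaptain (r : V → V → Prop) (s : Finset V) (u v : V) : Prop :=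
  u ∈ s ∧ v ∈ s ∧ r u v ∧ ∀ w ∈ s, w ≠ u → r w v → r u w

/-- The (undirected) domination graph of the subtournament on `s`. -/
def domGraph (r : V → V → Prop) (s : Finset V) : SimpleGraph V where
  Adj u v := (IsCaptain r s u v ∨ IsCaptain r s v u) ∧ u ≠ v
  symm := by
    constructor
    intro u v h
    exact ⟨h.1.symm, h.2.symm⟩
  loopless := by
    constructor
    intro u h
    exact h.2 rfl

/-- The inner retentiveness predicate used in the definition of `tau`. -/
def P [DecidableEq V] (r : V → V → Prop) [DecidableRel r] (s A : Finset V) : Prop :=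
  A.Nonempty ∧ ∀ v, v ∈ s → v ∈ A → ((inn r s v).Nonempty → tau r (inn r s v) ⊆ ↑A)

lemma tau_subset [DecidableEq V] (r : V → V → Prop) [DecidableRel r] (s : Finset V) :
    tau r s ⊆ ↑s := by
  intro x hx
  rw [tau] at hx
  obtain ⟨A, hxA, hAs, _⟩ := hx
  exact hAs hxA

open Classical in
lemma exists_min_P [DecidableEq V] (r : V → V → Prop) [DecidableRel r] (s : Finset V)
    (hs : s.Nonempty) :
    ∃ A, A ⊆ s ∧ P r s A ∧ ∀ B, B ⊆ s → B ⊂ A → ¬ P r s B := by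
  classical
  have hsP : P r s s := by
    refine ⟨hs, fun v hv hv2 h => ?_⟩
    intro x hx
    have h2 : x ∈ inn r s v := Finset.mem_coe.mp (tau_subset r (inn r s v) hx)
    exact Finset.mem_coe.mpr (Finset.mem_of_mem_filter x (Finset.mem_of_mem_erase h2))
  have hsmem : s ∈ (s.powerset.filter fun A => P r s A) := by
    simp [hsP]
  obtain ⟨A, hA, hmin⟩ := Finset.exists_min_image _ Finset.card ⟨s, hsmem⟩
  rw [Finset.mem_filter, Finset.mem_powerset] at hA
  refine ⟨A, hA.1, hA.2, fun B hBs hBA hBP => ?_⟩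
  have : A.card ≤ B.card := hmin B (by rw [Finset.mem_filter, Finset.mem_powerset]; exact ⟨hBs, hBP⟩)
  exact absurd this (not_le.mpr (Finset.card_lt_card hBA))

lemma mem_tau_of_min [DecidableEq V] (r : V → V → Prop) [DecidableRel r] {s A : Finset V}
    (hA : A ⊆ s) (hP : P r s A) (hmin : ∀ B, B ⊆ s → B ⊂ A → ¬ P r s B) :
    ∀ x ∈ A, x ∈ tau r s := by
  intro x hx
  rw [tau]
  exact ⟨A, hx, hA, hP.1, hP.2, fun B hBs hBA hB => hmin B hBs hBA hB⟩

lemma descent [DecidableEq V] (r : V → V → Prop) [DecidableRel r] :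
    ∀ n (D : Finset V), D.card ≤ n → ∀ (A : Finset V) u, u ∈ D → A ⊆ D → A.Nonempty →
      (∀ v ∈ A, (inn r D v).Nonempty → tau r (inn r D v) ⊆ ↑A) →
      u ∉ A → (∀ a ∈ A, r u a) → False := by
  intro n
  induction n with
  | zero =>
    intro D hD A u hu _ _ _ _ _
    rw [Nat.le_zero, Finset.card_eq_zero] at hD
    simp [hD] at hu
  | succ n ih =>
    intro D hD A u hu hAD hAne hret huA hdom
    obtain ⟨a, ha⟩ := hAne
    have hua : u ≠ a := fun h => huA (h ▸ ha)
    have hu' : u ∈ inn r D a :=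
      Finset.mem_erase.mpr ⟨hua, Finset.mem_filter.mpr ⟨hu, hdom a ha⟩⟩
    have htau : tau r (inn r D a) ⊆ ↑A := hret a ha ⟨u, hu'⟩
    obtain ⟨B, hBsub, hBP, hBmin⟩ := exists_min_P r (inn r D a) ⟨u, hu'⟩
    have hBA : ∀ b ∈ B, b ∈ A := fun b hb =>
      Finset.mem_coe.mp (htau (mem_tau_of_min r hBsub hBP hBmin b hb))
    have huB : u ∉ B := fun h => huA (hBA u h)
    have hcard : (inn r D a).card ≤ n :=
      Nat.lt_succ_iff.mp (lt_of_lt_of_le (inn_card_lt r D a (hAD ha)) hD)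
    exact ih (inn r D a) hcard B u hu' hBsub hBP.1
      (fun v hv => hBP.2 v (hBsub hv) hv) huB (fun b hb => hdom b (hBA b hb))

theorem stmt12 [DecidableEq V] (r : V → V → Prop) [DecidableRel r] (s : Finset V)
    (hT : IsTournament r s) (R : Finset V) (hR : MinRetentive r s R)
    (u v : V) (harc : IsCaptain r R u v) :
    ∀ w ∈ s, ¬ (r w u ∧ r w v) := by
  rintro w hw ⟨hwu, hwv⟩
  obtain ⟨⟨hRs, hRne, hret⟩, _⟩ := hR
  obtain ⟨huR, hvR, huv, hcap⟩ := harc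
  have hus : u ∈ s := hRs huR
  have hvs : v ∈ s := hRs hvR
  have hwv' : w ≠ v := fun h => (hT.1 v hvs) (h ▸ hwv)
  have hwu' : w ≠ u := fun h => (hT.1 u hus) (h ▸ hwu)
  have huv' : u ≠ v := fun h => (hT.1 v hvs) (h ▸ huv)
  set D := inn r s v with hD
  have huD : u ∈ D := Finset.mem_erase.mpr ⟨huv', Finset.mem_filter.mpr ⟨hus, huv⟩⟩
  have hwD : w ∈ D := Finset.mem_erase.mpr ⟨hwv', Finset.mem_filter.mpr ⟨hw, hwv⟩⟩
  have hDs : ∀ x ∈ D, x ∈ s := fun x hx => Finset.mem_of_mem_filter x (Finset.mem_of_mem_erase hx)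
  have hDv : ∀ x ∈ D, r x v := fun x hx =>
    (Finset.mem_filter.mp (Finset.mem_of_mem_erase hx)).2
  have htauR : tau r D ⊆ ↑R := hret v hvR ⟨u, huD⟩
  -- a minimal retentive set of T[D]
  obtain ⟨B, hBsub, hBP, hBmin⟩ := exists_min_P r D ⟨u, huD⟩
  have hBtau : ∀ b ∈ B, b ∈ tau r D := mem_tau_of_min r hBsub hBP hBmin
  have hBR : ∀ b ∈ B, b ∈ R := fun b hb => Finset.mem_coe.mp (htauR (hBtau b hb))
  -- u dominates every element of B other than u itself
  have hudom : ∀ b ∈ B, b ≠ u → r u b := fun b hb hbu =>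
    hcap b (hBR b hb) hbu (hDv b (hBsub hb))
  -- u must be in B, else infinite descent
  have huB : u ∈ B := by
    by_contra huB
    exact descent r D.card D le_rfl B u huD hBsub hBP.1
      (fun x hx => hBP.2 x (hBsub hx) hx) huB
      (fun b hb => hudom b hb (fun h => huB (h ▸ hb)))
  -- inneighbors of u within D are nonempty (w is one)
  have hwDu : w ∈ inn r D u := Finset.mem_erase.mpr ⟨hwu', Finset.mem_filter.mpr ⟨hwD, hwu⟩⟩
  have htauB : tau r (inn r D u) ⊆ ↑B := hBP.2 u (hBsub huB) huB ⟨w, hwDu⟩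
  obtain ⟨C, hCsub, hCP, hCmin⟩ := exists_min_P r (inn r D u) ⟨w, hwDu⟩
  obtain ⟨c, hc⟩ := hCP.1
  have hcB : c ∈ B := Finset.mem_coe.mp (htauB (mem_tau_of_min r hCsub hCP hCmin c hc))
  have hcDu : c ∈ inn r D u := hCsub hc
  have hcu : r c u := (Finset.mem_filter.mp (Finset.mem_of_mem_erase hcDu)).2
  have hcnu : c ≠ u := (Finset.mem_erase.mp hcDu).1
  have hcD : c ∈ D := Finset.mem_of_mem_filter c (Finset.mem_of_mem_erase hcDu)
  have hcs : c ∈ s := hDs c hcD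
  have huc : r u c := hcap c (hBR c hcB) hcnu (hDv c hcD)
  exact ((hT.2 u hus c hcs hcnu.symm).mp huc) hcu
end

section
/- Let T be a tournament with two disjoint minimal τ-retentive sets R1 and R2, u → v an arc in the directed domination graph of T[R1], and z → w an arc in the directed domination graph of T[R2]. Then: u ≻ w iff v ≻ z; u ≻ z iff v ≻ w; and exactly one of (u ≻ w) and (u ≻ z) holds. -/
variable {V : Type}

lemma mem_inn [DecidableEq V] (r : V → V → Prop) [DecidableRel r] (E : Finset V) (b x : V) :
    x ∈ inn r E b ↔ x ≠ b ∧ x ∈ E ∧ r x b := by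
  simp [inn, Finset.mem_erase, Finset.mem_filter, and_assoc]

lemma inn_subset [DecidableEq V] (r : V → V → Prop) [DecidableRel r] (E : Finset V) (b : V) :
    inn r E b ⊆ E := fun x hx => ((mem_inn r E b x).mp hx).2.1

/-- The retentiveness condition appearing inside `tau`. -/
def RC [DecidableEq V] (r : V → V → Prop) [DecidableRel r] (E A : Finset V) : Prop :=
  ∀ v, v ∈ E → v ∈ A → ((inn r E v).Nonempty → tau r (inn r E v) ⊆ ↑A)

lemma mem_tau_iff [DecidableEq V] (r : V → V → Prop) [DecidableRel r] (E : Finset V) (x : V) :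
    x ∈ tau r E ↔ ∃ A : Finset V, x ∈ A ∧ A ⊆ E ∧ A.Nonempty ∧ RC r E A ∧
      ∀ B : Finset V, B ⊆ E → B ⊂ A → ¬ (B.Nonempty ∧ RC r E B) := by
  rw [tau]
  rfl

lemma tau_sub [DecidableEq V] (r : V → V → Prop) [DecidableRel r] (E : Finset V) :
    tau r E ⊆ ↑E := by
  intro x hx
  obtain ⟨A, hxA, hAE, -⟩ := (mem_tau_iff r E x).mp hx
  exact hAE hxA

lemma RC_self [DecidableEq V] (r : V → V → Prop) [DecidableRel r] (E : Finset V) :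
    RC r E E := fun v _ _ _ x hx => inn_subset r E v (tau_sub r _ hx)

lemma exists_good [DecidableEq V] (r : V → V → Prop) [DecidableRel r] (E : Finset V) :
    ∀ A : Finset V, A ⊆ E → A.Nonempty → RC r E A →
    ∃ C : Finset V, C ⊆ E ∧ C.Nonempty ∧ RC r E C ∧
      ∀ B : Finset V, B ⊆ E → B ⊂ C → ¬ (B.Nonempty ∧ RC r E B) := by
  intro A
  induction A using Finset.strongInductionOn with
  | _ A ih =>
    intro hAE hAne hARC
    by_cases h : ∀ B : Finset V, B ⊆ E → B ⊂ A → ¬ (B.Nonempty ∧ RC r E B)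
    · exact ⟨A, hAE, hAne, hARC, h⟩
    · push_neg at h
      obtain ⟨B, hBE, hBA, hBne, hBRC⟩ := h
      exact ih B hBA hBE hBne hBRC

lemma tau_nonempty [DecidableEq V] (r : V → V → Prop) [DecidableRel r] (E : Finset V)
    (hE : E.Nonempty) : ∃ y, y ∈ tau r E := by
  obtain ⟨A, hAE, hAne, hARC, hAmin⟩ := exists_good r E E subset_rfl hE (RC_self r E)
  obtain ⟨a, ha⟩ := hAne
  exact ⟨a, (mem_tau_iff r E a).mpr ⟨A, ha, hAE, ⟨a, ha⟩, hARC, hAmin⟩⟩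

lemma cw_mem_tau [DecidableEq V] (r : V → V → Prop) [DecidableRel r] (s : Finset V)
    (hT : IsTournament r s) (E : Finset V) (hEs : E ⊆ s) (u : V) (huE : u ∈ E)
    (hcw : ∀ x ∈ E, x ≠ u → r u x) : u ∈ tau r E := by
  rw [mem_tau_iff]
  refine ⟨{u}, Finset.mem_singleton_self u, by simpa using huE,
    ⟨u, Finset.mem_singleton_self u⟩, ?_, ?_⟩
  · intro b hbE hbA hne
    exfalso
    rw [Finset.mem_singleton] at hbA
    subst hbA
    obtain ⟨x, hx⟩ := hne
    obtain ⟨hxb, hxE, hxu⟩ := (mem_inn r E b x).mp hx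
    have hub := hcw x hxE hxb
    exact ((hT.2 b (hEs huE) x (hEs hxE) (Ne.symm hxb)).mp hub) hxu
  · intro B _ hBA
    rintro ⟨hBne, -⟩
    have := Finset.eq_empty_of_ssubset_singleton hBA
    simp [this] at hBne

lemma core [DecidableEq V] (r : V → V → Prop) [DecidableRel r] (s : Finset V)
    (hT : IsTournament r s) :
    ∀ E : Finset V, E ⊆ s → ∀ u, u ∈ E → (∀ y, y ∈ tau r E → y ≠ u → r u y) →
      ∀ x, x ∈ E → x ≠ u → r u x := by
  intro E
  induction E using Finset.strongInductionOn with
  | _ E ih =>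
    intro hEs u huE hH x hxE hxu
    obtain ⟨A, hAE, hAne, hARC, hAmin⟩ := exists_good r E E subset_rfl ⟨u, huE⟩ (RC_self r E)
    have hmemA : ∀ a ∈ A, a ∈ tau r E := fun a ha =>
      (mem_tau_iff r E a).mpr ⟨A, ha, hAE, hAne, hARC, hAmin⟩
    have huA : u ∈ A := by
      by_contra huA
      obtain ⟨a, haA⟩ := hAne
      have hau : a ≠ u := fun h => huA (h ▸ haA)
      have hua : r u a := hH a (hmemA a haA) hau
      have huInn : u ∈ inn r E a := (mem_inn r E a u).mpr ⟨Ne.symm hau, huE, hua⟩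
      have hsub : tau r (inn r E a) ⊆ ↑A := hARC a (hAE haA) haA ⟨u, huInn⟩
      have hss : inn r E a ⊂ E :=
        Finset.ssubset_iff_of_subset (inn_subset r E a) |>.mpr
          ⟨a, hAE haA, fun h => ((mem_inn r E a a).mp h).1 rfl⟩
      have hcw := ih (inn r E a) hss ((inn_subset r E a).trans hEs) u huInn
        (fun y hy hyu => hH y (hmemA y (hsub hy)) hyu)
      have : u ∈ tau r (inn r E a) :=
        cw_mem_tau r s hT (inn r E a) ((inn_subset r E a).trans hEs) u huInn hcw
      exact huA (hsub this)
    by_contra hux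
    have hxu' : r x u := (hT.2 x (hEs hxE) u (hEs huE) hxu).mpr hux
    have hxInn : x ∈ inn r E u := (mem_inn r E u x).mpr ⟨hxu, hxE, hxu'⟩
    have hsub : tau r (inn r E u) ⊆ ↑A := hARC u huE huA ⟨x, hxInn⟩
    obtain ⟨y, hy⟩ := tau_nonempty r (inn r E u) ⟨x, hxInn⟩
    have hyInn : y ∈ inn r E u := tau_sub r _ hy
    obtain ⟨hyu, hyE, hyu'⟩ := (mem_inn r E u y).mp hyInn
    have huy : r u y := hH y (hmemA y (hsub hy)) hyu
    exact ((hT.2 u (hEs huE) y (hEs hyE) (Ne.symm hyu)).mp huy) hyu'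

lemma captain_global [DecidableEq V] (r : V → V → Prop) [DecidableRel r] (s : Finset V)
    (hT : IsTournament r s) (R : Finset V) (hR : Retentive r s R) (u v : V)
    (hc : IsCaptain r R u v) : ∀ x ∈ s, x ≠ u → r x v → r u x := by
  obtain ⟨huR, hvR, huv, hcap⟩ := hc
  obtain ⟨hRs, -, hret⟩ := hR
  have hus : u ∈ s := hRs huR
  have hvs : v ∈ s := hRs hvR
  have huv' : u ≠ v := fun h => hT.1 v hvs (h ▸ huv)
  have huE : u ∈ inn r s v := (mem_inn r s v u).mpr ⟨huv', hus, huv⟩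
  have hsubR : tau r (inn r s v) ⊆ ↑R := hret v hvR ⟨u, huE⟩
  have hH : ∀ y, y ∈ tau r (inn r s v) → y ≠ u → r u y := by
    intro y hy hyu
    have hyR : y ∈ R := hsubR hy
    have hyv : r y v := ((mem_inn r s v y).mp (tau_sub r _ hy)).2.2
    exact hcap y hyR hyu hyv
  intro x hxs hxu hxv
  have hxv' : x ≠ v := fun h => hT.1 v hvs (h ▸ hxv)
  have hxE : x ∈ inn r s v := (mem_inn r s v x).mpr ⟨hxv', hxs, hxv⟩
  exact core r s hT (inn r s v) (inn_subset r s v) u huE hH x hxE hxu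

theorem stmt13 [DecidableEq V] (r : V → V → Prop) [DecidableRel r] (s : Finset V)
    (hT : IsTournament r s) (R1 R2 : Finset V)
    (h1 : MinRetentive r s R1) (h2 : MinRetentive r s R2) (hd : Disjoint R1 R2)
    (u v z w : V) (harc1 : IsCaptain r R1 u v) (harc2 : IsCaptain r R2 z w) :
    (r u w ↔ r v z) ∧ (r u z ↔ r v w) ∧ Xor' (r u w) (r u z) := by
  have huR1 : u ∈ R1 := harc1.1
  have hvR1 : v ∈ R1 := harc1.2.1
  have hzR2 : z ∈ R2 := harc2.1
  have hwR2 : w ∈ R2 := harc2.2.1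
  have hR1s : R1 ⊆ s := h1.1.1
  have hR2s : R2 ⊆ s := h2.1.1
  have hus : u ∈ s := hR1s huR1
  have hvs : v ∈ s := hR1s hvR1
  have hzs : z ∈ s := hR2s hzR2
  have hws : w ∈ s := hR2s hwR2
  have hij : ∀ a ∈ R1, ∀ b ∈ R2, a ≠ b := fun a ha b hb h =>
    Finset.disjoint_left.mp hd ha (h ▸ hb)
  have huz : u ≠ z := hij u huR1 z hzR2
  have huw : u ≠ w := hij u huR1 w hwR2
  have hvz : v ≠ z := hij v hvR1 z hzR2
  have hvw : v ≠ w := hij v hvR1 w hwR2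
  have Fu := captain_global r s hT R1 h1.1 u v harc1
  have Fz := captain_global r s hT R2 h2.1 z w harc2
  have c1 : ¬ r v z → r u z := fun h =>
    Fu z hzs (Ne.symm huz) ((hT.2 z hzs v hvs (Ne.symm hvz)).mpr h)
  have c2 : ¬ r v w → r u w := fun h =>
    Fu w hws (Ne.symm huw) ((hT.2 w hws v hvs (Ne.symm hvw)).mpr h)
  have c3 : r u w → ¬ r u z := fun h =>
    (hT.2 z hzs u hus (Ne.symm huz)).mp (Fz u hus huz h)
  have c4 : r v w → ¬ r v z := fun h =>
    (hT.2 z hzs v hvs (Ne.symm hvz)).mp (Fz v hvs hvz h)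
  unfold Xor'
  tauto
end
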